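/- Let F be a field of characteristic zero, fix a monomial ordering ≺ on F[x_1,...,x_d], and let Δ = δ_0 ∘ {P_1(D),...,P_n(D)} be interpolation conditions given by linearly independent polynomials P_1,...,P_n ∈ F[x_1,...,x_d]. Then there exists a unique ≺-minimal monomial interpolating basis for Δ: there is a monomial interpolating basis T for Δ such that no monomial interpolating basis T' for Δ satisfies T' ≺ T, and such T is unique. -/

import Mathlib

open MvPolynomial

/-- The iterated partial derivative operator `D^α = ∂^{α_1}_{x_1} ⋯ ∂^{α_d}_{x_d}`. -/
noncomputable def Dmon (F : Type*) [CommSemiring F] {d : ℕ} (α : Fin d →₀ ℕ) :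
    Module.End F (MvPolynomial (Fin d) F) :=
  ((List.finRange d).map fun i =>
    ((pderiv i : Derivation F (MvPolynomial (Fin d) F) (MvPolynomial (Fin d) F)) :
      MvPolynomial (Fin d) F →ₗ[F] MvPolynomial (Fin d) F) ^ (α i)).prod

/-- The differential operator `P(D) = Σ_α P̂(α) D^α` induced by a polynomial `P`. -/
noncomputable def PD {F : Type*} [Field F] {d : ℕ} (P : MvPolynomial (Fin d) F) :
    Module.End F (MvPolynomial (Fin d) F) :=
  ∑ α ∈ P.support, P.coeff α • Dmon F α

/-- The linear functional `δ₀ ∘ P(D) : g ↦ (P(D) g)(0)`. -/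
noncomputable def delta0PD {F : Type*} [Field F] {d : ℕ} (P : MvPolynomial (Fin d) F) :
    MvPolynomial (Fin d) F →ₗ[F] F :=
  (MvPolynomial.aeval (0 : Fin d → F)).toLinearMap ∘ₗ PD P

/-- `prec` is a monomial ordering: a linear well-ordering of the monomials (identified with
their exponent vectors) that is compatible with multiplication of monomials. -/
structure IsMonomialOrder {d : ℕ} (prec : (Fin d →₀ ℕ) → (Fin d →₀ ℕ) → Prop) : Prop where
  irrefl : ∀ a, ¬ prec a a
  trans : ∀ a b c, prec a b → prec b c → prec a c
  total : ∀ a b, a ≠ b → prec a b ∨ prec b a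
  wf : WellFounded prec
  add_compat : ∀ a b c, prec a b → prec (a + c) (b + c)

/-- `m` is the `prec`-least monomial occurring in `P` with nonzero coefficient,
i.e. `X^m = lm(P)`. -/
def IsLeastMon {F : Type*} [Field F] {d : ℕ} (prec : (Fin d →₀ ℕ) → (Fin d →₀ ℕ) → Prop)
    (P : MvPolynomial (Fin d) F) (m : Fin d →₀ ℕ) : Prop :=
  m ∈ P.support ∧ ∀ m' ∈ P.support, m' ≠ m → prec m m'

/-- `{P_1, ..., P_n}` is a "reverse" reduced basis w.r.t. `prec`: the `P_i` are linearly
independent and `lm(P_i) ∉ Λ{P_j}` for all `i < j`. -/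
def IsRevReducedBasis {F : Type*} [Field F] {d n : ℕ}
    (prec : (Fin d →₀ ℕ) → (Fin d →₀ ℕ) → Prop) (P : Fin n → MvPolynomial (Fin d) F) : Prop :=
  LinearIndependent F P ∧
    ∀ i j : Fin n, i < j → ∀ m, IsLeastMon prec (P i) m → m ∉ (P j).support

/-- The finset of exponent vectors `T` is a monomial interpolating basis for the `n`
interpolation conditions `lam`: `T` has `n` (distinct) elements and for every vector of
values `f` there is a unique `g` in the span of the monomials `X^m`, `m ∈ T`, with
`lam i g = f i` for all `i`. -/
def IsMonIntBasisSet {F : Type*} [Field F] {d n : ℕ}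
    (lam : Fin n → (MvPolynomial (Fin d) F →ₗ[F] F)) (T : Finset (Fin d →₀ ℕ)) : Prop :=
  T.card = n ∧ ∀ f : Fin n → F, ∃! g : MvPolynomial (Fin d) F,
    g ∈ Submodule.span F ((fun m => (monomial m (1 : F) : MvPolynomial (Fin d) F)) ''
        (T : Set (Fin d →₀ ℕ))) ∧ ∀ i, lam i g = f i

/-- `m` is the `prec`-greatest element of the finset `S`. -/
def IsMaxOf {d : ℕ} (prec : (Fin d →₀ ℕ) → (Fin d →₀ ℕ) → Prop)
    (S : Finset (Fin d →₀ ℕ)) (m : Fin d →₀ ℕ) : Prop :=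
  m ∈ S ∧ ∀ m' ∈ S, m' ≠ m → prec m' m

/-- `T' ≺ T` for two finsets of monomials with `T − T' ≠ ∅` and `T' − T ≠ ∅`:
`max_≺ (T' − T) ≺ max_≺ (T − T')`. -/
def SetPrec {d : ℕ} (prec : (Fin d →₀ ℕ) → (Fin d →₀ ℕ) → Prop)
    (T' T : Finset (Fin d →₀ ℕ)) : Prop :=
  ∃ a b, IsMaxOf prec (T' \ T) a ∧ IsMaxOf prec (T \ T') b ∧ prec a b


section AuxProof
variable {F : Type*} [Field F] {d : ℕ}

lemma pderiv_pow_monomial (i : Fin d) (k : ℕ) (m : Fin d →₀ ℕ) (c : F) :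
    ((((pderiv i : Derivation F (MvPolynomial (Fin d) F) (MvPolynomial (Fin d) F)) :
      MvPolynomial (Fin d) F →ₗ[F] MvPolynomial (Fin d) F)) ^ k) (monomial m c) =
    monomial (m - Finsupp.single i k) (c * ((m i).descFactorial k : F)) := by
  induction k with
  | zero => simp
  | succ k ih =>
    rw [pow_succ', Module.End.mul_apply, ih]
    simp only [Derivation.coeFn_coe, pderiv_monomial]
    rw [tsub_tsub, ← Finsupp.single_add]
    congr 1
    rw [Finsupp.tsub_apply, Finsupp.single_eq_same, Nat.descFactorial_succ]
    push_cast
    ring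

lemma foldr_single_apply (α : Fin d →₀ ℕ) (L : List (Fin d)) (j : Fin d) (hj : j ∉ L) :
    ((L.map fun i => Finsupp.single i (α i)).sum) j = 0 := by
  induction L with
  | nil => simp
  | cons a l ih =>
    simp only [List.map_cons, List.sum_cons, Finsupp.add_apply]
    have hja : j ≠ a := by simp at hj; tauto
    rw [Finsupp.single_eq_of_ne' (fun h => hja h.symm),
      ih (fun h => hj (List.mem_cons_of_mem _ h)), add_zero]

lemma listprod_pderiv_monomial (α : Fin d →₀ ℕ) (L : List (Fin d)) (hL : L.Nodup)
    (m : Fin d →₀ ℕ) (c : F) :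
    ((L.map fun i =>
      (((pderiv i : Derivation F (MvPolynomial (Fin d) F) (MvPolynomial (Fin d) F)) :
        MvPolynomial (Fin d) F →ₗ[F] MvPolynomial (Fin d) F)) ^ (α i)).prod)
      (monomial m c) =
    monomial (m - (L.map fun i => Finsupp.single i (α i)).sum)
      (c * ((L.map fun i => ((m i).descFactorial (α i) : F)).prod)) := by
  induction L with
  | nil => simp
  | cons a l ih =>
    have ha : a ∉ l := (List.nodup_cons.1 hL).1
    simp only [List.map_cons, List.prod_cons, List.sum_cons, Module.End.mul_apply]
    rw [ih (List.nodup_cons.1 hL).2, pderiv_pow_monomial, tsub_tsub, add_comm]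
    congr 1
    rw [Finsupp.tsub_apply, foldr_single_apply α l a ha, Nat.sub_zero]
    ring

lemma sum_single_univ (α : Fin d →₀ ℕ) : (∑ i : Fin d, Finsupp.single i (α i)) = α := by
  ext j
  rw [Finsupp.finset_sum_apply]
  simp [Finsupp.single_apply, Finset.sum_ite_eq']

lemma Dmon_monomial (α m : Fin d →₀ ℕ) (c : F) :
    Dmon F α (monomial m c) =
      monomial (m - α) (c * ∏ i : Fin d, ((m i).descFactorial (α i) : F)) := by
  rw [Dmon, listprod_pderiv_monomial α _ (List.nodup_finRange d)]
  rw [← Fin.sum_univ_def, ← Fin.prod_univ_def, sum_single_univ]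

lemma delta0PD_monomial (Q : MvPolynomial (Fin d) F) (m : Fin d →₀ ℕ) :
    delta0PD Q (monomial m 1) = (∏ i : Fin d, ((m i).factorial : F)) * Q.coeff m := by
  rw [delta0PD, LinearMap.comp_apply, PD, LinearMap.sum_apply]
  simp only [LinearMap.smul_apply, Dmon_monomial, one_mul, AlgHom.toLinearMap_apply,
    map_sum, map_smul, aeval_zero, constantCoeff_monomial, Algebra.algebraMap_self,
    RingHom.id_apply, smul_eq_mul]
  rw [Finset.sum_eq_single m]
  · rw [if_pos (tsub_self m)]
    simp [Nat.descFactorial_self, mul_comm]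
  · intro β hβ hne
    by_cases h : m - β = 0
    · rw [if_pos h]
      have : ∃ i, m i < β i := by
        by_contra hc
        push_neg at hc
        have h2 : ∀ i, m i ≤ β i := fun i => by
          have := Finsupp.ext_iff.1 h i
          simp [Finsupp.tsub_apply] at this
          omega
        exact hne (Finsupp.ext fun i => by have := hc i; have := h2 i; omega)
      obtain ⟨i, hi⟩ := this
      rw [Finset.prod_eq_zero (Finset.mem_univ i)]
      · ring
      · rw [Nat.descFactorial_eq_zero_iff_lt.2 hi, Nat.cast_zero]
    · rw [if_neg h, mul_zero]
  · intro h
    rw [notMem_support_iff.1 h, zero_mul]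

variable {n : ℕ}

/-- row vector of coefficients of the `P i` at monomial `m` -/
noncomputable def rvec (P : Fin n → MvPolynomial (Fin d) F) (m : Fin d →₀ ℕ) : Fin n → F :=
  fun i => coeff m (P i)

noncomputable def cfac (F : Type*) [Field F] {d : ℕ} (m : Fin d →₀ ℕ) : F :=
  ∏ i : Fin d, ((m i).factorial : F)

lemma cfac_ne_zero [CharZero F] (m : Fin d →₀ ℕ) : (cfac F m : F) ≠ 0 := by
  rw [cfac]
  refine Finset.prod_ne_zero_iff.2 fun i _ => ?_
  exact_mod_cast Nat.cast_ne_zero.2 (Nat.factorial_ne_zero _)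

lemma monIntBasis_iff [CharZero F] {n : ℕ} (P : Fin n → MvPolynomial (Fin d) F)
    (T : Finset (Fin d →₀ ℕ)) :
    IsMonIntBasisSet (fun i => delta0PD (P i)) T ↔
      (T.card = n ∧ LinearIndependent F
        (fun m : ↥(T : Set (Fin d →₀ ℕ)) => rvec P m.1)) := by
  classical
  set v : ↥(T : Set (Fin d →₀ ℕ)) → MvPolynomial (Fin d) F :=
    fun m => monomial m.1 1 with hv_def
  have hv : LinearIndependent F v := by
    have h := (basisMonomials (Fin d) F).linearIndependent
    rw [coe_basisMonomials] at h
    exact h.comp _ Subtype.val_injective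
  have himg : (fun m => (monomial m (1:F) : MvPolynomial (Fin d) F)) '' (T : Set (Fin d →₀ ℕ))
      = Set.range v := Set.image_eq_range _ _
  set W := Submodule.span F (Set.range v) with hW
  set Φ : MvPolynomial (Fin d) F →ₗ[F] (Fin n → F) :=
    LinearMap.pi (fun i => delta0PD (P i)) with hΦ
  set Φres := Φ.domRestrict W with hres
  have step1 : (∀ f : Fin n → F, ∃! g : MvPolynomial (Fin d) F,
      g ∈ W ∧ ∀ i, delta0PD (P i) g = f i) ↔ Function.Bijective Φres := by
    constructor
    · intro h
      constructor
      · intro g₁ g₂ heq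
        obtain ⟨g, hg, hu⟩ := h (Φres g₁)
        have e1 : (g₁ : MvPolynomial (Fin d) F) = g := hu _ ⟨g₁.2, fun i => rfl⟩
        have e2 : (g₂ : MvPolynomial (Fin d) F) = g :=
          hu _ ⟨g₂.2, fun i => (congrFun heq.symm i : _)⟩
        exact Subtype.ext (e1.trans e2.symm)
      · intro f
        obtain ⟨g, ⟨hgW, hgf⟩, -⟩ := h f
        exact ⟨⟨g, hgW⟩, funext fun i => hgf i⟩
    · intro hbij f
      obtain ⟨g, hg⟩ := hbij.2 f
      refine ⟨(g : MvPolynomial (Fin d) F), ⟨g.2, fun i => by rw [← hg]; rfl⟩, ?_⟩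
      rintro g' ⟨hg'W, hg'f⟩
      have h2 : Φres ⟨g', hg'W⟩ = Φres g := (funext hg'f : _).trans hg.symm
      exact congrArg Subtype.val (hbij.1 h2)
  have hfinW : FiniteDimensional F W := Module.Finite.of_basis (Module.Basis.span hv)
  have hcardW : Module.finrank F W = T.card := by
    rw [Module.finrank_eq_card_basis (Module.Basis.span hv)]
    simp
  have hΦv : ∀ m : ↥(T : Set (Fin d →₀ ℕ)), Φ (v m) = cfac F m.1 • rvec P m.1 := by
    intro m; funext i
    simp only [hΦ, LinearMap.pi_apply, hv_def, delta0PD_monomial, Pi.smul_apply, smul_eq_mul,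
      rvec, cfac]
  have step3 : LinearIndependent F (fun m : ↥(T : Set (Fin d →₀ ℕ)) => Φ (v m)) ↔
      LinearIndependent F (fun m : ↥(T : Set (Fin d →₀ ℕ)) => rvec P m.1) := by
    set w : ↥(T : Set (Fin d →₀ ℕ)) → Fˣ :=
      fun m => Units.mk0 (cfac F m.1) (cfac_ne_zero _) with hw
    constructor
    · intro h
      have h2 := h.units_smul w⁻¹
      convert h2 using 1
      funext m
      simp only [Pi.smul_apply', Pi.inv_apply, Units.smul_def, hΦv m, hw, Units.val_inv_eq_inv_val,
        Units.val_mk0, smul_smul]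
      rw [inv_mul_cancel₀ (cfac_ne_zero _), one_smul]
    · intro h
      have h2 := h.units_smul w
      convert h2 using 1
      funext m
      simp only [Pi.smul_apply', Units.smul_def, hΦv m, hw, Units.val_mk0]
  have step2 : T.card = n →
      (Function.Bijective Φres ↔ LinearIndependent F
        (fun m : ↥(T : Set (Fin d →₀ ℕ)) => Φ (v m))) := by
    intro hcard
    have hfr : Module.finrank F W = Module.finrank F (Fin n → F) := by
      rw [hcardW, hcard, Module.finrank_pi, Fintype.card_fin]
    constructor
    · intro hbij
      have h := (Module.Basis.span hv).linearIndependent.map' Φres (LinearMap.ker_eq_bot.2 hbij.1)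
      convert h using 1
      funext m
      show Φ (v m) = Φres (Module.Basis.span hv m)
      rw [hres, LinearMap.domRestrict_apply, Module.Basis.span_apply]
      all_goals rfl
    · intro hli
      have hsp : Submodule.span F (Set.range fun m : ↥(T : Set (Fin d →₀ ℕ)) => Φ (v m)) = ⊤ := by
        apply hli.span_eq_top_of_card_eq_finrank'
        rw [Module.finrank_pi]
        simp [hcard]
      have hmap : Submodule.map Φ W = ⊤ := by
        rw [hW, Submodule.map_span, ← Set.range_comp]
        exact hsp
      have hsurj : Function.Surjective Φres := by
        intro y
        have hy : y ∈ Submodule.map Φ W := by rw [hmap]; trivial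
        obtain ⟨x, hx, hxy⟩ := hy
        exact ⟨⟨x, hx⟩, hxy⟩
      exact ⟨(LinearMap.injective_iff_surjective_of_finrank_eq_finrank hfr).2 hsurj, hsurj⟩
  rw [IsMonIntBasisSet, himg]
  constructor
  · rintro ⟨hcard, h⟩
    exact ⟨hcard, step3.1 ((step2 hcard).1 (step1.1 h))⟩
  · rintro ⟨hcard, h⟩
    exact ⟨hcard, step1.2 ((step2 hcard).2 (step3.2 h))⟩

end AuxProof


section MatroidAux
variable {F : Type*} [Field F] {d n : ℕ} {prec : (Fin d →₀ ℕ) → (Fin d →₀ ℕ) → Prop}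

lemma exists_isMaxOf (hord : IsMonomialOrder prec) (S : Finset (Fin d →₀ ℕ)) :
    S.Nonempty → ∃ m, IsMaxOf prec S m := by
  classical
  induction S using Finset.induction_on with
  | empty => intro h; exact absurd h (by simp)
  | @insert a s ha ih =>
    intro _
    rcases s.eq_empty_or_nonempty with rfl | hne
    · refine ⟨a, Finset.mem_insert_self _ _, ?_⟩
      intro m' hm' hne'
      rcases Finset.mem_insert.1 hm' with rfl | h
      · exact absurd rfl hne'
      · exact absurd h (Finset.notMem_empty _)
    · obtain ⟨m, hmS, hmax⟩ := ih hne
      have ham : a ≠ m := fun h => ha (h ▸ hmS)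
      rcases hord.total a m ham with hc | hc
      · refine ⟨m, Finset.mem_insert_of_mem hmS, ?_⟩
        intro m' hm' hne'
        rcases Finset.mem_insert.1 hm' with rfl | h
        · exact hc
        · exact hmax m' h hne'
      · refine ⟨a, Finset.mem_insert_self _ _, ?_⟩
        intro m' hm' hne'
        rcases Finset.mem_insert.1 hm' with rfl | h
        · exact absurd rfl hne'
        · by_cases hm'm : m' = m
          · exact hm'm ▸ hc
          · exact hord.trans _ _ _ (hmax m' h hm'm) hc

/-- the greedy / minimal independent set: those `m` whose row is not in the span of
the rows of earlier monomials -/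
def TsetOf (prec : (Fin d →₀ ℕ) → (Fin d →₀ ℕ) → Prop)
    (r : (Fin d →₀ ℕ) → (Fin n → F)) : Set (Fin d →₀ ℕ) :=
  {m | r m ∉ Submodule.span F (r '' {m' | prec m' m})}

lemma reach (hord : IsMonomialOrder prec) (r : (Fin d →₀ ℕ) → (Fin n → F))
    (m : Fin d →₀ ℕ) :
    r m ∈ Submodule.span F (r '' {t | t ∈ TsetOf prec r ∧ (prec t m ∨ t = m)}) := by
  refine hord.wf.induction
    (C := fun m => r m ∈ Submodule.span F (r '' {t | t ∈ TsetOf prec r ∧ (prec t m ∨ t = m)}))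
    m ?_
  intro x ih
  by_cases hx : x ∈ TsetOf prec r
  · exact Submodule.subset_span ⟨x, ⟨hx, Or.inr rfl⟩, rfl⟩
  · have hx' : r x ∈ Submodule.span F (r '' {m' | prec m' x}) := not_not.1 hx
    refine Submodule.span_le.2 ?_ hx'
    rintro _ ⟨m', hm', rfl⟩
    rw [SetLike.mem_coe]
    refine Submodule.span_mono (Set.image_mono ?_) (ih m' hm')
    rintro t ⟨ht, hc⟩
    refine ⟨ht, Or.inl ?_⟩
    rcases hc with hc | rfl
    · exact hord.trans _ _ _ hc hm'
    · exact hm'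

lemma indep_image (hord : IsMonomialOrder prec) (r : (Fin d →₀ ℕ) → (Fin n → F))
    (s : Finset (Fin d →₀ ℕ)) (hs : (s : Set (Fin d →₀ ℕ)) ⊆ TsetOf prec r) :
    LinearIndependent F (fun b : ↥(r '' (s : Set (Fin d →₀ ℕ))) => (b : Fin n → F)) := by
  classical
  induction s using Finset.strongInduction with
  | _ s ih =>
    rcases s.eq_empty_or_nonempty with rfl | hne
    · rw [Finset.coe_empty, Set.image_empty]
      exact linearIndependent_empty F _
    · obtain ⟨x, hxs, hxmax⟩ := exists_isMaxOf hord s hne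
      have hximg : r '' (s : Set (Fin d →₀ ℕ)) =
          insert (r x) (r '' ((s.erase x : Finset _) : Set (Fin d →₀ ℕ))) := by
        rw [← Set.image_insert_eq, ← Finset.coe_insert, Finset.insert_erase hxs]
      rw [hximg]
      refine LinearIndepOn.id_insert
        (ih (s.erase x) (Finset.erase_ssubset hxs)
          (fun t ht => hs (Finset.mem_coe.2 (Finset.mem_of_mem_erase (Finset.mem_coe.1 ht))))) ?_
      have hsub : r '' ((s.erase x : Finset _) : Set (Fin d →₀ ℕ)) ⊆
          r '' {m' | prec m' x} := by
        refine Set.image_mono ?_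
        intro t ht
        have ht' := Finset.mem_coe.1 ht
        exact hxmax t (Finset.mem_of_mem_erase ht') (Finset.ne_of_mem_erase ht')
      intro hmem
      exact (hs (Finset.mem_coe.2 hxs)) (Submodule.span_mono hsub hmem)

lemma injOn_Tset (hord : IsMonomialOrder prec) (r : (Fin d →₀ ℕ) → (Fin n → F)) :
    Set.InjOn r (TsetOf prec r) := by
  intro a haT b hbT hab
  by_contra hne
  rcases hord.total a b hne with hc | hc
  · exact hbT (hab ▸ Submodule.subset_span ⟨a, hc, rfl⟩)
  · exact haT (hab ▸ Submodule.subset_span ⟨b, hc, rfl⟩)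

lemma indep_subtype (hord : IsMonomialOrder prec) (r : (Fin d →₀ ℕ) → (Fin n → F))
    (s : Finset (Fin d →₀ ℕ)) (hs : (s : Set (Fin d →₀ ℕ)) ⊆ TsetOf prec r) :
    LinearIndependent F (fun m : ↥(s : Set (Fin d →₀ ℕ)) => r m.1) :=
  (linearIndepOn_iff_image ((injOn_Tset hord r).mono hs)).2 (indep_image hord r s hs)

end MatroidAux


section MatroidAux2
variable {F : Type*} [Field F] {d n : ℕ} {prec : (Fin d →₀ ℕ) → (Fin d →₀ ℕ) → Prop}

lemma Tset_finite (hord : IsMonomialOrder prec) (r : (Fin d →₀ ℕ) → (Fin n → F)) :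
    (TsetOf prec r).Finite := by
  by_contra h
  obtain ⟨t, hts, htc⟩ := Set.Infinite.exists_subset_card_eq h (n + 1)
  have hli := indep_subtype hord r t hts
  have hcard := hli.fintype_card_le_finrank
  rw [Module.finrank_pi] at hcard
  simp only [Finset.coe_sort_coe, Fintype.card_coe, Fintype.card_fin] at hcard
  omega

noncomputable def TfinOf (hord : IsMonomialOrder prec) (r : (Fin d →₀ ℕ) → (Fin n → F)) :
    Finset (Fin d →₀ ℕ) := (Tset_finite hord r).toFinset

lemma coe_TfinOf (hord : IsMonomialOrder prec) (r : (Fin d →₀ ℕ) → (Fin n → F)) :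
    ((TfinOf hord r : Finset (Fin d →₀ ℕ)) : Set (Fin d →₀ ℕ)) = TsetOf prec r :=
  Set.Finite.coe_toFinset _

lemma span_Tfin (hord : IsMonomialOrder prec) (r : (Fin d →₀ ℕ) → (Fin n → F))
    (hspan : Submodule.span F (Set.range r) = ⊤) :
    Submodule.span F (Set.range
      (fun m : ↥((TfinOf hord r : Finset (Fin d →₀ ℕ)) : Set (Fin d →₀ ℕ)) => r m.1)) = ⊤ := by
  rw [← Set.image_eq_range, coe_TfinOf, eq_top_iff, ← hspan]
  refine Submodule.span_le.2 ?_
  rintro _ ⟨m, rfl⟩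
  rw [SetLike.mem_coe]
  refine Submodule.span_mono (Set.image_mono ?_) (reach hord r m)
  rintro t ⟨ht, -⟩
  exact ht

lemma card_TfinOf (hord : IsMonomialOrder prec) (r : (Fin d →₀ ℕ) → (Fin n → F))
    (hspan : Submodule.span F (Set.range r) = ⊤) :
    (TfinOf hord r).card = n := by
  have hli := indep_subtype hord r (TfinOf hord r) (by rw [coe_TfinOf])
  have hfr := Module.finrank_eq_card_basis (Module.Basis.mk hli (span_Tfin hord r hspan).ge)
  rw [Module.finrank_pi] at hfr
  simp only [Finset.coe_sort_coe, Fintype.card_coe, Fintype.card_fin] at hfr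
  omega

set_option maxHeartbeats 1000000 in
lemma filter_card_le (hord : IsMonomialOrder prec) (r : (Fin d →₀ ℕ) → (Fin n → F))
    (T : Finset (Fin d →₀ ℕ))
    (hTi : LinearIndependent F (fun m : ↥((T : Finset (Fin d →₀ ℕ)) : Set (Fin d →₀ ℕ)) => r m.1))
    (x : Fin d →₀ ℕ) [DecidablePred (fun m => prec m x)] :
    (T.filter (fun m => prec m x)).card ≤
      ((TfinOf hord r).filter (fun m => prec m x)).card := by
  classical
  set A := T.filter (fun m => prec m x) with hA_def
  set B := (TfinOf hord r).filter (fun m => prec m x) with hB_def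
  have hAsub : ∀ m : ↥((A : Finset (Fin d →₀ ℕ)) : Set (Fin d →₀ ℕ)),
      m.1 ∈ ((T : Finset (Fin d →₀ ℕ)) : Set (Fin d →₀ ℕ)) := by
    rintro ⟨m, hm⟩
    exact Finset.mem_coe.2 (Finset.mem_of_mem_filter _ (Finset.mem_coe.1 hm))
  have hA : LinearIndependent F (fun m : ↥((A : Finset _) : Set (Fin d →₀ ℕ)) => r m.1) := by
    have h := hTi.comp
      (fun m : ↥((A : Finset _) : Set (Fin d →₀ ℕ)) =>
        (⟨m.1, hAsub m⟩ : ↥((T : Finset (Fin d →₀ ℕ)) : Set (Fin d →₀ ℕ))))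
      (fun u v huv => by
        have h2 := congrArg Subtype.val huv
        exact Subtype.ext h2)
    exact h
  have hBsub : ((B : Finset (Fin d →₀ ℕ)) : Set (Fin d →₀ ℕ)) ⊆ TsetOf prec r := by
    intro t ht
    have := Finset.mem_of_mem_filter _ (Finset.mem_coe.1 ht)
    rw [← coe_TfinOf hord r]
    exact Finset.mem_coe.2 this
  have hB : LinearIndependent F (fun m : ↥((B : Finset _) : Set (Fin d →₀ ℕ)) => r m.1) :=
    indep_subtype hord r B hBsub
  have hrA : Module.finrank F
      (Submodule.span F (Set.range (fun m : ↥((A : Finset _) : Set (Fin d →₀ ℕ)) => r m.1)))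
        = A.card := by
    rw [finrank_span_eq_card hA]
    simp
  have hrB : Module.finrank F
      (Submodule.span F (Set.range (fun m : ↥((B : Finset _) : Set (Fin d →₀ ℕ)) => r m.1)))
        = B.card := by
    rw [finrank_span_eq_card hB]
    simp
  have hle : Submodule.span F (Set.range (fun m : ↥((A : Finset _) : Set (Fin d →₀ ℕ)) => r m.1))
      ≤ Submodule.span F (Set.range (fun m : ↥((B : Finset _) : Set (Fin d →₀ ℕ)) => r m.1)) := by
    rw [← Set.image_eq_range, ← Set.image_eq_range]
    refine Submodule.span_le.2 ?_
    rintro _ ⟨t, ht, rfl⟩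
    rw [SetLike.mem_coe]
    have htx : prec t x := (Finset.mem_filter.1 (Finset.mem_coe.1 ht)).2
    refine Submodule.span_mono (Set.image_mono ?_) (reach hord r t)
    rintro u ⟨hu, hc⟩
    refine Finset.mem_coe.2 (Finset.mem_filter.2 ⟨?_, ?_⟩)
    · exact Finset.mem_coe.1 ((coe_TfinOf hord r).symm ▸ hu)
    · rcases hc with hc | rfl
      · exact hord.trans _ _ _ hc htx
      · exact htx
  rw [← hrA, ← hrB]
  exact Submodule.finrank_mono hle

lemma key_lemma (hord : IsMonomialOrder prec) (r : (Fin d →₀ ℕ) → (Fin n → F))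
    (hspan : Submodule.span F (Set.range r) = ⊤)
    (T : Finset (Fin d →₀ ℕ)) (hTcard : T.card = n)
    (hTi : LinearIndependent F (fun m : ↥((T : Finset (Fin d →₀ ℕ)) : Set (Fin d →₀ ℕ)) => r m.1))
    (b : Fin d →₀ ℕ) (hb : IsMaxOf prec (T \ TfinOf hord r) b)
    (x : Fin d →₀ ℕ) (hx : x ∈ TfinOf hord r \ T) : prec x b := by
  classical
  by_contra hnot
  obtain ⟨hxT, hxnT⟩ := Finset.mem_sdiff.1 hx
  have h1 := filter_card_le hord r T hTi x
  have h2 := Finset.card_filter_add_card_filter_not (s := T) (p := fun m => prec m x)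
  have h3 := Finset.card_filter_add_card_filter_not (s := TfinOf hord r)
    (p := fun m => prec m x)
  have hTf := card_TfinOf hord r hspan
  have hsub : T.filter (fun m => ¬ prec m x) ⊆
      ((TfinOf hord r).filter (fun m => ¬ prec m x)).erase x := by
    intro m hm
    obtain ⟨hmT, hmx⟩ := Finset.mem_filter.1 hm
    have hmne : m ≠ x := fun h => hxnT (h ▸ hmT)
    have hxm : prec x m := (hord.total x m (Ne.symm hmne)).resolve_right hmx
    have hmTf : m ∈ TfinOf hord r := by
      by_contra hmn
      have hmsd : m ∈ T \ TfinOf hord r := Finset.mem_sdiff.2 ⟨hmT, hmn⟩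
      by_cases hmb : m = b
      · exact hnot (hmb ▸ hxm)
      · exact hnot (hord.trans _ _ _ hxm (hb.2 m hmsd hmb))
    exact Finset.mem_erase.2 ⟨hmne, Finset.mem_filter.2 ⟨hmTf, hmx⟩⟩
  have hxB : x ∈ (TfinOf hord r).filter (fun m => ¬ prec m x) :=
    Finset.mem_filter.2 ⟨hxT, hord.irrefl x⟩
  have h4 := Finset.card_le_card hsub
  rw [Finset.card_erase_of_mem hxB] at h4
  have h5 := Finset.card_pos.2 ⟨x, hxB⟩
  omega

end MatroidAux2

lemma span_range_rvec {F : Type*} [Field F] {d n : ℕ} (P : Fin n → MvPolynomial (Fin d) F)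
    (hP : LinearIndependent F P) :
    Submodule.span F (Set.range (rvec P)) = ⊤ := by
  classical
  by_contra h
  have hex : ∃ x, x ∉ Submodule.span F (Set.range (rvec P)) := by
    by_contra h2
    push_neg at h2
    exact h (Submodule.eq_top_iff'.2 h2)
  obtain ⟨x, hx⟩ := hex
  obtain ⟨f, hfx, hfmap⟩ := Submodule.exists_dual_map_eq_bot_of_notMem hx inferInstance
  have hf0 : ∀ m, f (rvec P m) = 0 := by
    intro m
    have hmem : f (rvec P m) ∈ Submodule.map f (Submodule.span F (Set.range (rvec P))) :=
      Submodule.mem_map_of_mem (Submodule.subset_span (Set.mem_range_self m))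
    rw [hfmap, Submodule.mem_bot] at hmem
    exact hmem
  set a : Fin n → F := fun i => f (fun j => if i = j then 1 else 0) with ha
  have hfv : ∀ v : Fin n → F, f v = ∑ i, v i * a i := by
    intro v
    conv_lhs => rw [pi_eq_sum_univ v]
    rw [map_sum]
    refine Finset.sum_congr rfl fun i _ => ?_
    rw [map_smul, smul_eq_mul]
  have ha0 : ∀ i, a i = 0 := by
    have hz : ∑ i, a i • P i = 0 := by
      apply MvPolynomial.ext
      intro m
      have hm := hf0 m
      rw [hfv (rvec P m)] at hm
      simp only [MvPolynomial.coeff_sum, MvPolynomial.coeff_smul, coeff_zero, smul_eq_mul]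
      rw [← hm]
      exact Finset.sum_congr rfl fun i _ => mul_comm _ _
    exact Fintype.linearIndependent_iff.1 hP a hz
  apply hfx
  rw [hfv x]
  simp [ha0]

/-- For interpolation conditions `Δ = δ₀ ∘ {P_1(D), ..., P_n(D)}` given by
linearly independent polynomials and any monomial ordering `≺`, there exists a unique
`≺`-minimal monomial interpolating basis for `Δ`. -/
theorem existsUnique_minimal_monIntBasis {F : Type*} [Field F] [CharZero F] {d n : ℕ}
    (prec : (Fin d →₀ ℕ) → (Fin d →₀ ℕ) → Prop) (hord : IsMonomialOrder prec)
    (P : Fin n → MvPolynomial (Fin d) F) (hP : LinearIndependent F P) :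
    ∃! T : Finset (Fin d →₀ ℕ),
      IsMonIntBasisSet (fun i => delta0PD (P i)) T ∧
        ∀ T' : Finset (Fin d →₀ ℕ),
          IsMonIntBasisSet (fun i => delta0PD (P i)) T' → ¬ SetPrec prec T' T := by
  classical
  have hspan := span_range_rvec P hP
  have hstar_good : IsMonIntBasisSet (fun i => delta0PD (P i)) (TfinOf hord (rvec P)) :=
    (monIntBasis_iff P _).2 ⟨card_TfinOf hord _ hspan,
      indep_subtype hord _ _ (by rw [coe_TfinOf])⟩
  have hmin : ∀ T', IsMonIntBasisSet (fun i => delta0PD (P i)) T' →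
      ¬ SetPrec prec T' (TfinOf hord (rvec P)) := by
    intro T' hT' hsp
    obtain ⟨a, b, hmaxa, hmaxb, hab⟩ := hsp
    obtain ⟨hc', hi'⟩ := (monIntBasis_iff P T').1 hT'
    have hba : prec b a := key_lemma hord (rvec P) hspan T' hc' hi' a hmaxa b hmaxb.1
    exact hord.irrefl a (hord.trans _ _ _ hab hba)
  refine ⟨TfinOf hord (rvec P), ⟨hstar_good, hmin⟩, ?_⟩
  rintro T ⟨hTgood, hTmin⟩
  by_contra hne
  obtain ⟨hTc, hTi⟩ := (monIntBasis_iff P T).1 hTgood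
  have hdne : (T \ TfinOf hord (rvec P)).Nonempty := by
    rw [Finset.sdiff_nonempty]
    intro hsub
    exact hne (Finset.eq_of_subset_of_card_le hsub
      (le_of_eq ((card_TfinOf hord _ hspan).trans hTc.symm)))
  have hdne' : (TfinOf hord (rvec P) \ T).Nonempty := by
    rw [Finset.sdiff_nonempty]
    intro hsub
    exact hne ((Finset.eq_of_subset_of_card_le hsub
      (le_of_eq (hTc.trans (card_TfinOf hord _ hspan).symm))).symm)
  obtain ⟨b, hb⟩ := exists_isMaxOf hord _ hdne
  obtain ⟨a, ha⟩ := exists_isMaxOf hord _ hdne'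
  have hab : prec a b := key_lemma hord (rvec P) hspan T hTc hTi b hb a ha.1
  exact hTmin (TfinOf hord (rvec P)) hstar_good ⟨a, b, ha, hb, hab⟩
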